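/- For any t = (t_1,...,t_n) ∈ R^n and any δ > 0, the set of real numbers q such that |q·t_i − p_i| < δ for some integers p_i (for all i) has positive lower density in [0,∞); that is, liminf_{T→∞} (1/T)·Leb({q ∈ [0,T] : dist(q·t, Z^n) < δ}) > 0. -/

import Mathlib

open MeasureTheory Filter

theorem syndetic_near_return (n : ℕ) (t : Fin n → ℝ) (δ : ℝ) (hδ : 0 < δ) :
    ∃ L : ℝ, 0 < L ∧ ∀ a : ℝ, ∃ q ∈ Set.Icc a (a + L),
      ∀ i, ∃ p : ℤ, |q * t i - (p : ℝ)| < δ := by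
  haveI : Fact ((0:ℝ) < 1) := ⟨one_pos⟩
  set φ : ℝ → (Fin n → AddCircle (1:ℝ)) := fun q i => ((q * t i : ℝ) : AddCircle (1:ℝ)) with hφ
  have hφcont : Continuous φ := by
    apply continuous_pi
    intro i
    exact (AddCircle.continuous_mk' (1:ℝ)).comp (continuous_id.mul continuous_const)
  have hφsub : ∀ a b : ℝ, ∀ i, φ (a - b) i = φ a i - φ b i := by
    intro a b i
    simp only [hφ, sub_mul]
    rfl
  have hK : IsCompact (closure (Set.range φ)) := isClosed_closure.isCompact
  set U : ℝ → Set (Fin n → AddCircle (1:ℝ)) := fun s => {x | ∀ i, ‖x i - φ s i‖ < δ} with hU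
  have hUopen : ∀ s, IsOpen (U s) := by
    intro s
    have : U s = ⋂ i, (fun x : Fin n → AddCircle (1:ℝ) => x i - φ s i) ⁻¹' Metric.ball 0 δ := by
      ext x; simp [hU, mem_ball_zero_iff]
    rw [this]
    exact isOpen_iInter_of_finite fun i =>
      (Metric.isOpen_ball).preimage ((continuous_apply i).sub continuous_const)
  have hcover : closure (Set.range φ) ⊆ ⋃ s : ℝ, U s := by
    intro x hx
    have hO : IsOpen {y : Fin n → AddCircle (1:ℝ) | ∀ i, ‖y i - x i‖ < δ} := by
      have : {y : Fin n → AddCircle (1:ℝ) | ∀ i, ‖y i - x i‖ < δ}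
          = ⋂ i, (fun y : Fin n → AddCircle (1:ℝ) => y i - x i) ⁻¹' Metric.ball 0 δ := by
        ext y; simp [mem_ball_zero_iff]
      rw [this]
      exact isOpen_iInter_of_finite fun i =>
        (Metric.isOpen_ball).preimage ((continuous_apply i).sub continuous_const)
    have hxO : x ∈ {y : Fin n → AddCircle (1:ℝ) | ∀ i, ‖y i - x i‖ < δ} := by
      simp [hδ]
    obtain ⟨y, hy1, s, rfl⟩ := mem_closure_iff.mp hx _ hO hxO
    refine Set.mem_iUnion.mpr ⟨s, fun i => ?_⟩
    have := hy1 i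
    rwa [norm_sub_rev] at this
  obtain ⟨F, hF⟩ := hK.elim_finite_subcover U hUopen hcover
  have hFne : F.Nonempty := by
    have h0 : φ 0 ∈ closure (Set.range φ) := subset_closure (Set.mem_range_self 0)
    obtain ⟨s, hs, -⟩ := Set.mem_iUnion₂.mp (hF h0)
    exact ⟨s, hs⟩
  set M := F.max' hFne
  set m := F.min' hFne
  refine ⟨M - m + 1, by linarith [F.min'_le _ (F.max'_mem hFne)], fun a => ?_⟩
  have hb : φ (a + M) ∈ closure (Set.range φ) := subset_closure (Set.mem_range_self _)
  obtain ⟨s, hsF, hs⟩ := Set.mem_iUnion₂.mp (hF hb)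
  refine ⟨a + M - s, ⟨by linarith [F.le_max' s hsF], by linarith [F.min'_le s hsF]⟩, fun i => ?_⟩
  have hnorm : ‖((((a + M - s) * t i : ℝ)) : AddCircle (1:ℝ))‖ < δ := by
    have := hs i
    rw [← hφsub (a + M) s i] at this
    exact this
  refine ⟨round ((a + M - s) * t i), ?_⟩
  have := AddCircle.norm_eq (p := (1:ℝ)) (x := (a + M - s) * t i)
  simp only [inv_one, one_mul, mul_one] at this
  rwa [this] at hnorm

/-- The set of times `q` at which `q • t` lies within `δ` of the integer lattice
has positive lower density in `[0, ∞)`. -/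
theorem near_return_times_positive_lower_density (n : ℕ) (t : Fin n → ℝ)
    (δ : ℝ) (hδ : 0 < δ) :
    0 < liminf (fun T : ℝ =>
      (volume {q : ℝ | q ∈ Set.Icc (0 : ℝ) T ∧
        ∀ i, ∃ p : ℤ, |q * t i - (p : ℝ)| < δ}).toReal / T) atTop := by
  obtain ⟨L, hL, hsyn⟩ := syndetic_near_return n t (δ / 2) (half_pos hδ)
  set C : ℝ := 1 + ∑ i, |t i| with hCdef
  have hC : 0 < C := by positivity
  have htC : ∀ i, |t i| ≤ C := by
    intro i
    have h1 : |t i| ≤ ∑ j, |t j| :=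
      Finset.single_le_sum (fun j _ => abs_nonneg (t j)) (Finset.mem_univ i)
    linarith
  set ε : ℝ := δ / (2 * C) with hεdef
  have hε : 0 < ε := by positivity
  have hεC : ε * C = δ / 2 := by
    field_simp [hεdef]
    rw [hεdef, div_mul_eq_mul_div, div_mul_eq_mul_div, div_eq_iff (by positivity)]
    ring
  set S : Set ℝ := {q : ℝ | ∀ i, ∃ p : ℤ, |q * t i - (p : ℝ)| < δ} with hS
  -- every interval [a, a+L] contains q with [q, q+ε) ⊆ S
  have key : ∀ a : ℝ, ∃ q ∈ Set.Icc a (a + L), Set.Ico q (q + ε) ⊆ S := by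
    intro a
    obtain ⟨q, hq, hqS⟩ := hsyn a
    refine ⟨q, hq, fun x hx i => ?_⟩
    obtain ⟨p, hp⟩ := hqS i
    refine ⟨p, ?_⟩
    have hxq : |x - q| ≤ ε := by
      rw [abs_le]; constructor <;> [linarith [hx.1]; linarith [hx.2]]
    have h2 : |x * t i - p| ≤ |q * t i - p| + |x - q| * |t i| := by
      have : x * t i - p = (q * t i - p) + (x - q) * t i := by ring
      rw [this]
      calc |(q * t i - p) + (x - q) * t i| ≤ |q * t i - p| + |(x - q) * t i| := abs_add_le _ _
        _ = |q * t i - p| + |x - q| * |t i| := by rw [abs_mul]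
    have h3 : |x - q| * |t i| ≤ ε * C :=
      mul_le_mul hxq (htC i) (abs_nonneg _) (le_of_lt hε)
    rw [hεC] at h3
    linarith
  set D : ℝ := L + ε with hDdef
  have hD : 0 < D := by positivity
  set c : ℝ := ε / (2 * D) with hcdef
  have hc : 0 < c := by positivity
  have hbound : ∀ T : ℝ, 2 * D ≤ T →
      c ≤ (volume {q : ℝ | q ∈ Set.Icc (0 : ℝ) T ∧
        ∀ i, ∃ p : ℤ, |q * t i - (p : ℝ)| < δ}).toReal / T := by
    intro T hT
    have hT0 : 0 < T := by linarith
    set A : Set ℝ := {q : ℝ | q ∈ Set.Icc (0 : ℝ) T ∧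
        ∀ i, ∃ p : ℤ, |q * t i - (p : ℝ)| < δ} with hA
    set m : ℕ := ⌊T / D⌋₊ with hm
    have hm2 : (2 : ℕ) ≤ m := by
      rw [hm]
      apply Nat.le_floor
      rw [le_div_iff₀ hD]
      push_cast
      linarith
    have hmT : (m : ℝ) * D ≤ T := by
      have := Nat.floor_le (a := T / D) (by positivity)
      rw [← hm] at this
      calc (m : ℝ) * D ≤ (T / D) * D := by nlinarith
        _ = T := by field_simp
    have hTm : T < ((m : ℝ) + 1) * D := by
      have := Nat.lt_floor_add_one (T / D)
      rw [← hm] at this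
      nlinarith [(div_lt_iff₀ hD).mp this]
    -- pick the return points
    choose q hq hqS using fun k : ℕ => key (k * D)
    -- the disjoint intervals
    have hsub : ∀ k ∈ Finset.range m, Set.Ico (q k) (q k + ε) ⊆ A := by
      intro k hk x hx
      have hkm : (k : ℝ) ≤ (m : ℝ) - 1 := by
        have : (k : ℕ) < m := Finset.mem_range.mp hk
        have : (k : ℝ) + 1 ≤ (m : ℝ) := by exact_mod_cast this
        linarith
      have h1 : (0 : ℝ) ≤ (k : ℝ) * D := by positivity
      have h2 : q k + ε ≤ (k : ℝ) * D + D := by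
        have := (hq k).2
        simp only [hDdef] at *
        linarith
      constructor
      · constructor
        · have := (hq k).1; linarith [hx.1]
        · have : x < (k : ℝ) * D + D := lt_of_lt_of_le hx.2 h2
          nlinarith
      · exact hqS k hx
    have hdisj : (↑(Finset.range m) : Set ℕ).PairwiseDisjoint
        fun k => Set.Ico (q k) (q k + ε) := by
      have aux : ∀ i j : ℕ, i < j →
          Disjoint (Set.Ico (q i) (q i + ε)) (Set.Ico (q j) (q j + ε)) := by
        intro i j h
        apply Set.disjoint_left.mpr
        intro x hxi hxj
        have h1 : q i + ε ≤ ((i : ℝ) + 1) * D := by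
          have := (hq i).2; simp only [hDdef] at *; linarith
        have h2 : ((i : ℝ) + 1) * D ≤ (j : ℝ) * D := by
          have : (i : ℝ) + 1 ≤ (j : ℝ) := by exact_mod_cast h
          nlinarith
        have h3 : (j : ℝ) * D ≤ q j := (hq j).1
        have := hxi.2
        have := hxj.1
        linarith
      intro i _ j _ hij
      rcases hij.lt_or_gt with h | h
      · exact aux i j h
      · exact (aux j i h).symm
    have hvol : (volume (⋃ k ∈ Finset.range m, Set.Ico (q k) (q k + ε))) =
        (m : ENNReal) * ENNReal.ofReal ε := by
      rw [measure_biUnion_finset hdisj (fun k _ => measurableSet_Ico)]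
      simp [Real.volume_Ico, Finset.sum_const, Finset.card_range]
    have hAvol : (m : ℝ) * ε ≤ (volume A).toReal := by
      have hsub' : (⋃ k ∈ Finset.range m, Set.Ico (q k) (q k + ε)) ⊆ A :=
        Set.iUnion₂_subset hsub
      have hAfin : volume A ≠ ⊤ := by
        have : volume A ≤ volume (Set.Icc (0:ℝ) T) := measure_mono fun x hx => hx.1
        rw [Real.volume_Icc] at this
        exact ne_top_of_le_ne_top ENNReal.ofReal_ne_top this
      have := measure_mono (μ := volume) hsub'
      rw [hvol] at this
      have := ENNReal.toReal_mono hAfin this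
      rwa [ENNReal.toReal_mul, ENNReal.toReal_natCast,
        ENNReal.toReal_ofReal (le_of_lt hε)] at this
    rw [le_div_iff₀ hT0]
    calc c * T ≤ (m : ℝ) * ε := by
          have hm1 : (1 : ℝ) ≤ (m : ℝ) := by exact_mod_cast Nat.one_le_of_lt hm2
          rw [hcdef]
          rw [div_mul_eq_mul_div, div_le_iff₀ (by positivity)]
          nlinarith
      _ ≤ (volume A).toReal := hAvol
  -- conclude via liminf
  refine lt_of_lt_of_le hc (le_liminf_of_le ?_ ?_)
  · apply Filter.IsBoundedUnder.isCoboundedUnder_ge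
    refine ⟨1, ?_⟩
    rw [Filter.eventually_map]
    filter_upwards [eventually_ge_atTop (1 : ℝ)] with T hT
    have h1 : volume {q : ℝ | q ∈ Set.Icc (0 : ℝ) T ∧
        ∀ i, ∃ p : ℤ, |q * t i - (p : ℝ)| < δ} ≤ ENNReal.ofReal T := by
      have : volume {q : ℝ | q ∈ Set.Icc (0 : ℝ) T ∧
          ∀ i, ∃ p : ℤ, |q * t i - (p : ℝ)| < δ} ≤ volume (Set.Icc (0:ℝ) T) :=
        measure_mono fun x hx => hx.1
      rwa [Real.volume_Icc, sub_zero] at this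
    have h2 := ENNReal.toReal_mono ENNReal.ofReal_ne_top h1
    rw [ENNReal.toReal_ofReal (by linarith)] at h2
    rw [div_le_one (by linarith)]
    exact h2
  · filter_upwards [eventually_ge_atTop (2 * D)] with T hT
    exact hbound T hT
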